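/- There exists a constant c₀ ≥ 0 such that for all positive integers n, k, d with 2 ≤ k and 2e·k ≤ n, there exists a (2k, n, d, k+1)-selector of length t with t + 2k ≤ 2d·ln(n/k) + c₀ · k · ln(n/k). (Consequently, a two-stage group testing algorithm with runlength constraint d identifying up to k positives among n items exists using at most 2d·ln(n/k) + O(k·ln(n/k)) tests.) -/

import Mathlib

/-- Any two 1's in the binary vector `v` are separated by a run of at least `d` 0's:
if coordinates `i < j` both equal 1 then `j - i ≥ d + 1`. -/
def RunConstrained {t : ℕ} (d : ℕ) (v : Fin t → Bool) : Prop :=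
  ∀ i j : Fin t, i < j → v i = true → v j = true → (i : ℕ) + d + 1 ≤ (j : ℕ)

/-- `M` (a `t × n` binary matrix) is a `(k,n,d,p)`-selector: every column satisfies the
runlength constraint `d`, and for every set `S` of `k` columns, the submatrix they form
contains among its rows at least `p` distinct rows of the `k × k` identity matrix, i.e.
at least `p` columns `j ∈ S` admit a row where `j` has a 1 and all other columns of `S`
have a 0. -/
def IsSelector (k n d p t : ℕ) (M : Fin t → Fin n → Bool) : Prop :=
  (∀ j : Fin n, RunConstrained d (fun i => M i j)) ∧
  ∀ S : Finset (Fin n), S.card = k →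
    p ≤ (S.filter (fun j =>
          ∃ i : Fin t, M i j = true ∧ ∀ j' ∈ S, j' ≠ j → M i j' = false)).card

/-- Every column of `M` has Hamming weight exactly `w`. -/
def ColWeight (w : ℕ) {t n : ℕ} (M : Fin t → Fin n → Bool) : Prop :=
  ∀ j : Fin n, (Finset.univ.filter (fun i => M i j = true)).card = w



open Finset
open scoped Classical

namespace Sel16

variable {n w B : ℕ}


/-- column `j` collides with some other member of `S` in every block. -/
def badcol (x : Fin n → Fin w → Fin B) (S : Finset (Fin n)) (j : Fin n) : Prop :=
  ∀ b : Fin w, ∃ j' ∈ S, j' ≠ j ∧ x j' b = x j b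

noncomputable def dup (x : Fin n → Fin w → Fin B) (S : Finset (Fin n)) (b : Fin w) :
    Finset (Fin n) :=
  S.filter (fun j => ∃ j' ∈ S, j' ≠ j ∧ x j' b = x j b)

noncomputable def rep (x : Fin n → Fin w → Fin B) (S : Finset (Fin n)) (b : Fin w) :
    Finset (Fin n) :=
  S.filter (fun j => ∃ j' ∈ S, j' < j ∧ x j' b = x j b)

lemma dup_card_le (x : Fin n → Fin w → Fin B) (S : Finset (Fin n)) (b : Fin w) :
    (dup x S b).card ≤ 2 * (rep x S b).card := by
  have hmain : ((dup x S b) \ (rep x S b)).card ≤ (rep x S b).card := by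
    set f : Fin n → Fin n := fun j =>
      if h : (S.filter (fun j' => j < j' ∧ x j' b = x j b)).Nonempty
      then (S.filter (fun j' => j < j' ∧ x j' b = x j b)).min' h else j with hf
    have hne : ∀ j ∈ (dup x S b) \ (rep x S b),
        (S.filter (fun j' => j < j' ∧ x j' b = x j b)).Nonempty := by
      intro j hj
      rw [Finset.mem_sdiff] at hj
      obtain ⟨hjd, hjr⟩ := hj
      rw [dup, Finset.mem_filter] at hjd
      obtain ⟨hjS, j', hj'S, hj'ne, hj'eq⟩ := hjd
      have hgt : j < j' := by
        rcases lt_trichotomy j' j with h | h | h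
        · exact absurd (by rw [rep, Finset.mem_filter]; exact ⟨hjS, j', hj'S, h, hj'eq⟩) hjr
        · exact absurd h hj'ne
        · exact h
      exact ⟨j', Finset.mem_filter.2 ⟨hj'S, hgt, hj'eq⟩⟩
    have hmem : ∀ j ∈ (dup x S b) \ (rep x S b),
        f j ∈ S.filter (fun j' => j < j' ∧ x j' b = x j b) := by
      intro j hj
      rw [hf]; simp only [dif_pos (hne j hj)]
      exact Finset.min'_mem _ _
    apply Finset.card_le_card_of_injOn f
    · intro j hj
      have h := hmem j hj
      rw [Finset.mem_filter] at h
      have hjS : j ∈ S := (Finset.mem_filter.1 (Finset.mem_sdiff.1 hj).1).1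
      rw [rep, Finset.mem_coe, Finset.mem_filter]
      exact ⟨h.1, j, hjS, h.2.1, h.2.2.symm⟩
    · intro j1 hj1 j2 hj2 heq
      simp only [Finset.mem_coe] at hj1 hj2
      by_contra hne12
      have h1 := hmem j1 hj1
      have h2 := hmem j2 hj2
      rw [Finset.mem_filter] at h1 h2
      rw [heq] at h1
      have hxeq : x j1 b = x j2 b := by rw [← h1.2.2, h2.2.2]
      have hS1 : j1 ∈ S := (Finset.mem_filter.1 (Finset.mem_sdiff.1 hj1).1).1
      have hS2 : j2 ∈ S := (Finset.mem_filter.1 (Finset.mem_sdiff.1 hj2).1).1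
      rcases lt_trichotomy j1 j2 with h | h | h
      · exact (Finset.mem_sdiff.1 hj2).2 (by
          rw [rep, Finset.mem_filter]; exact ⟨hS2, j1, hS1, h, hxeq⟩)
      · exact hne12 h
      · exact (Finset.mem_sdiff.1 hj1).2 (by
          rw [rep, Finset.mem_filter]; exact ⟨hS1, j2, hS2, h, hxeq.symm⟩)
  calc (dup x S b).card ≤ ((dup x S b) \ (rep x S b)).card + (rep x S b).card :=
        Finset.card_le_card_sdiff_add_card
    _ ≤ 2 * (rep x S b).card := by omega

lemma rep_card_of_badcol {k : ℕ} (x : Fin n → Fin w → Fin B) (S : Finset (Fin n))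
    (h : k ≤ (S.filter (badcol x S)).card) (b : Fin w) :
    (k + 1) / 2 ≤ (rep x S b).card := by
  have hsub : S.filter (badcol x S) ⊆ dup x S b := by
    intro j hj
    rw [Finset.mem_filter] at hj
    exact Finset.mem_filter.2 ⟨hj.1, hj.2 b⟩
  have h2 := dup_card_le x S b
  have h3 := Finset.card_le_card hsub
  omega

variable {k : ℕ}

def Spec (S : Finset (Fin n)) (hS : S.card = 2 * k) (x : Fin n → Fin w → Fin B) (b : Fin w)
    (a : Finset (Fin n) × (Fin ((k + 1) / 2) → Fin (2 * k))) : Prop :=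
  ∃ hc : a.1.card = (k + 1) / 2, a.1 ⊆ S ∧ ∀ l,
    S.orderEmbOfFin hS (a.2 l) < a.1.orderEmbOfFin hc l ∧
    x (S.orderEmbOfFin hS (a.2 l)) b = x (a.1.orderEmbOfFin hc l) b

lemma exists_spec (S : Finset (Fin n)) (hS : S.card = 2 * k) (x : Fin n → Fin w → Fin B)
    (b : Fin w) (h : (k + 1) / 2 ≤ (rep x S b).card) : ∃ a, Spec S hS x b a := by
  obtain ⟨R, hRsub, hRcard⟩ := Finset.exists_subset_card_eq h
  have hex : ∀ l : Fin ((k + 1) / 2), ∃ i : Fin (2 * k),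
      S.orderEmbOfFin hS i < R.orderEmbOfFin hRcard l ∧
      x (S.orderEmbOfFin hS i) b = x (R.orderEmbOfFin hRcard l) b := by
    intro l
    have hjR : R.orderEmbOfFin hRcard l ∈ R := Finset.orderEmbOfFin_mem R hRcard l
    have hjrep := hRsub hjR
    rw [rep, Finset.mem_filter] at hjrep
    obtain ⟨j', hj'S, hj'lt, hj'eq⟩ := hjrep.2
    have : j' ∈ Set.range (S.orderEmbOfFin hS) := by
      rw [Finset.range_orderEmbOfFin]; exact hj'S
    obtain ⟨i, hi⟩ := this
    exact ⟨i, by rw [hi]; exact hj'lt, by rw [hi]; exact hj'eq⟩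
  refine ⟨(R, fun l => (hex l).choose), hRcard,
    fun j hj => Finset.mem_of_mem_filter j (hRsub hj), ?_⟩
  intro l
  exact (hex l).choose_spec

noncomputable def enc (hk : 0 < k) (S : Finset (Fin n)) (hS : S.card = 2 * k)
    (x : Fin n → Fin w → Fin B) (b : Fin w) :
    Finset (Fin n) × (Fin ((k + 1) / 2) → Fin (2 * k)) :=
  if h : (k + 1) / 2 ≤ (rep x S b).card then (exists_spec S hS x b h).choose
  else (∅, fun _ => ⟨0, by omega⟩)

lemma enc_spec (hk : 0 < k) (S : Finset (Fin n)) (hS : S.card = 2 * k)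
    (x : Fin n → Fin w → Fin B) (b : Fin w) (h : (k + 1) / 2 ≤ (rep x S b).card) :
    Spec S hS x b (enc hk S hS x b) := by
  rw [enc, dif_pos h]
  exact (exists_spec S hS x b h).choose_spec

lemma fiber_card_le (hk : 0 < k) (hB : 0 < B) (S : Finset (Fin n)) (hS : S.card = 2 * k)
    (hrep : ∀ x : Fin n → Fin w → Fin B, k ≤ (S.filter (badcol x S)).card →
      ∀ b, (k + 1) / 2 ≤ (rep x S b).card)
    (aux : Fin w → Finset (Fin n) × (Fin ((k + 1) / 2) → Fin (2 * k)))
    (haux : ∀ b, (aux b).1.card = (k + 1) / 2) :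
    (((univ : Finset (Fin n → Fin w → Fin B)).filter
        (fun x => k ≤ (S.filter (badcol x S)).card)).filter
        (fun x => (fun b => enc hk S hS x b) = aux)).card
      ≤ B ^ ((n - (k + 1) / 2) * w) := by
  set Y := Fintype.piFinset (fun j : Fin n => Fintype.piFinset (fun b : Fin w =>
      if j ∈ (aux b).1 then ({(⟨0, hB⟩ : Fin B)} : Finset (Fin B)) else univ)) with hYdef
  have hYcard : Y.card = B ^ ((n - (k + 1) / 2) * w) := by
    rw [hYdef, Fintype.card_piFinset]
    have hstep : ∀ j : Fin n,
        (Fintype.piFinset fun b : Fin w =>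
          if j ∈ (aux b).1 then ({(⟨0, hB⟩ : Fin B)} : Finset (Fin B)) else univ).card
        = ∏ b : Fin w, (if j ∈ (aux b).1 then 1 else B) := by
      intro j; rw [Fintype.card_piFinset]
      refine Finset.prod_congr rfl fun b _ => ?_
      split <;> simp
    rw [Finset.prod_congr rfl (fun j _ => hstep j), Finset.prod_comm]
    have hinner : ∀ b : Fin w, (∏ j : Fin n, if j ∈ (aux b).1 then 1 else B)
        = B ^ (n - (k + 1) / 2) := by
      intro b
      rw [Finset.prod_ite, Finset.prod_const_one, Finset.prod_const, one_mul]
      congr 1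
      have h1 : (univ.filter (fun j : Fin n => j ∈ (aux b).1)).card = (k + 1) / 2 := by
        rw [Finset.filter_univ_mem]; exact haux b
      have h2 := Finset.card_filter_add_card_filter_not
        (s := (univ : Finset (Fin n))) (p := fun j => j ∈ (aux b).1)
      rw [Finset.card_univ, Fintype.card_fin] at h2
      omega
    rw [Finset.prod_congr rfl (fun b _ => hinner b), Finset.prod_const, Finset.card_univ,
      Fintype.card_fin, ← pow_mul]
  rw [← hYcard]
  apply Finset.card_le_card_of_injOn
    (fun x => (fun j b => if j ∈ (aux b).1 then (⟨0, hB⟩ : Fin B) else x j b))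
  · intro x _
    rw [hYdef, Finset.mem_coe, Fintype.mem_piFinset]
    intro j
    rw [Fintype.mem_piFinset]
    intro b
    by_cases hmem : j ∈ (aux b).1
    · simp [hmem]
    · simp [hmem]
  · intro x hx y hy hxy
    simp only [Finset.mem_coe, Finset.mem_filter, Finset.mem_univ, true_and] at hx hy
    obtain ⟨hxbad, hxenc⟩ := hx
    obtain ⟨hybad, hyenc⟩ := hy
    have hspecx : ∀ b, Spec S hS x b (aux b) := by
      intro b
      have h := enc_spec hk S hS x b (hrep x hxbad b)
      rwa [congrFun hxenc b] at h
    have hspecy : ∀ b, Spec S hS y b (aux b) := by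
      intro b
      have h := enc_spec hk S hS y b (hrep y hybad b)
      rwa [congrFun hyenc b] at h
    have key : ∀ N : ℕ, ∀ j : Fin n, (j : ℕ) < N → ∀ b, x j b = y j b := by
      intro N
      induction N with
      | zero => intro j hj; omega
      | succ N ih =>
        intro j hj b
        by_cases hmem : j ∈ (aux b).1
        · obtain ⟨hc, hsub, hpart⟩ := hspecx b
          obtain ⟨hc', hsub', hpart'⟩ := hspecy b
          have hj' : j ∈ Set.range ((aux b).1.orderEmbOfFin hc) := by
            rw [Finset.range_orderEmbOfFin]; exact hmem
          obtain ⟨l, hl⟩ := hj'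
          have h1 := hpart l
          have h2 := hpart' l
          have hee : (aux b).1.orderEmbOfFin hc' = (aux b).1.orderEmbOfFin hc := rfl
          rw [hee] at h2
          rw [hl] at h1 h2
          have hlt : ((S.orderEmbOfFin hS ((aux b).2 l)) : ℕ) < N := by
            have hlt1 := h1.1
            rw [Fin.lt_def] at hlt1
            omega
          calc x j b = x (S.orderEmbOfFin hS ((aux b).2 l)) b := h1.2.symm
            _ = y (S.orderEmbOfFin hS ((aux b).2 l)) b := ih _ hlt b
            _ = y j b := h2.2
        · have h := congrFun (congrFun hxy j) b
          simp only [if_neg hmem] at h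
          exact h
    funext j b
    exact key n j j.isLt b



variable {n w B k : ℕ}

lemma count_bad_per_S (hk : 0 < k) (hB : 0 < B) (S : Finset (Fin n)) (hS : S.card = 2 * k)
    (hrep : ∀ x : Fin n → Fin w → Fin B, k ≤ (S.filter (badcol x S)).card →
      ∀ b, (k + 1) / 2 ≤ (rep x S b).card) :
    ((univ : Finset (Fin n → Fin w → Fin B)).filter
        (fun x => k ≤ (S.filter (badcol x S)).card)).card
    ≤ ((2 * k).choose ((k + 1) / 2) * (2 * k) ^ ((k + 1) / 2)) ^ w
        * B ^ ((n - (k + 1) / 2) * w) := by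
  set AuxSet := Fintype.piFinset (fun _ : Fin w =>
    (S.powersetCard ((k + 1) / 2)) ×ˢ (univ : Finset (Fin ((k + 1) / 2) → Fin (2 * k)))) with hA
  have hmaps : ∀ x ∈ (univ : Finset (Fin n → Fin w → Fin B)).filter
      (fun x => k ≤ (S.filter (badcol x S)).card),
      (fun b => enc hk S hS x b) ∈ AuxSet := by
    intro x hx
    rw [Finset.mem_filter] at hx
    rw [hA, Fintype.mem_piFinset]
    intro b
    obtain ⟨hc, hsub, -⟩ := enc_spec hk S hS x b (hrep x hx.2 b)
    rw [Finset.mem_product]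
    exact ⟨Finset.mem_powersetCard.2 ⟨hsub, hc⟩, Finset.mem_univ _⟩
  rw [Finset.card_eq_sum_card_fiberwise hmaps]
  have hbound : ∀ aux ∈ AuxSet,
      (((univ : Finset (Fin n → Fin w → Fin B)).filter
        (fun x => k ≤ (S.filter (badcol x S)).card)).filter
        (fun x => (fun b => enc hk S hS x b) = aux)).card
      ≤ B ^ ((n - (k + 1) / 2) * w) := by
    intro aux hauxmem
    rw [hA, Fintype.mem_piFinset] at hauxmem
    have haux : ∀ b, (aux b).1.card = (k + 1) / 2 := by
      intro b
      have := hauxmem b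
      rw [Finset.mem_product] at this
      exact (Finset.mem_powersetCard.1 this.1).2
    exact fiber_card_le hk hB S hS hrep aux haux
  calc (∑ aux ∈ AuxSet,
      (((univ : Finset (Fin n → Fin w → Fin B)).filter
        (fun x => k ≤ (S.filter (badcol x S)).card)).filter
        (fun x => (fun b => enc hk S hS x b) = aux)).card)
      ≤ AuxSet.card • (B ^ ((n - (k + 1) / 2) * w)) := Finset.sum_le_card_nsmul _ _ _ hbound
    _ = ((2 * k).choose ((k + 1) / 2) * (2 * k) ^ ((k + 1) / 2)) ^ w
        * B ^ ((n - (k + 1) / 2) * w) := by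
      rw [smul_eq_mul]
      congr 1
      rw [hA, Fintype.card_piFinset]
      rw [Finset.prod_const, Finset.card_univ, Fintype.card_fin]
      congr 1
      rw [Finset.card_product, Finset.card_powersetCard, hS, Finset.card_univ,
        Fintype.card_fun, Fintype.card_fin, Fintype.card_fin]

lemma exists_good (hk : 0 < k) (hB : 0 < B)
    (hrep : ∀ (S : Finset (Fin n)) (x : Fin n → Fin w → Fin B),
      k ≤ (S.filter (badcol x S)).card → ∀ b, (k + 1) / 2 ≤ (rep x S b).card)
    (hnum : (n.choose (2 * k)) *
        (((2 * k).choose ((k + 1) / 2) * (2 * k) ^ ((k + 1) / 2)) ^ w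
          * B ^ ((n - (k + 1) / 2) * w)) < B ^ (w * n)) :
    ∃ x : Fin n → Fin w → Fin B, ∀ S : Finset (Fin n), S.card = 2 * k →
      (S.filter (badcol x S)).card < k := by
  by_contra hcon
  push_neg at hcon
  have hsub : (univ : Finset (Fin n → Fin w → Fin B)) ⊆
      ((univ : Finset (Fin n)).powersetCard (2 * k)).biUnion
        (fun S => univ.filter (fun x => k ≤ (S.filter (badcol x S)).card)) := by
    intro x _
    obtain ⟨S, hScard, hSk⟩ := hcon x
    exact Finset.mem_biUnion.2 ⟨S, Finset.mem_powersetCard.2 ⟨Finset.subset_univ S, hScard⟩,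
      Finset.mem_filter.2 ⟨Finset.mem_univ x, hSk⟩⟩
  have h1 : (univ : Finset (Fin n → Fin w → Fin B)).card ≤
      ∑ S ∈ (univ : Finset (Fin n)).powersetCard (2 * k),
        (univ.filter (fun x : Fin n → Fin w → Fin B =>
          k ≤ (S.filter (badcol x S)).card)).card :=
    (Finset.card_le_card hsub).trans Finset.card_biUnion_le
  have h2 : ∀ S ∈ (univ : Finset (Fin n)).powersetCard (2 * k),
      (univ.filter (fun x : Fin n → Fin w → Fin B =>
        k ≤ (S.filter (badcol x S)).card)).card ≤
      ((2 * k).choose ((k + 1) / 2) * (2 * k) ^ ((k + 1) / 2)) ^ w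
        * B ^ ((n - (k + 1) / 2) * w) := by
    intro S hSmem
    have hScard := (Finset.mem_powersetCard.1 hSmem).2
    exact count_bad_per_S hk hB S hScard (hrep S)
  have h3 := h1.trans ((Finset.sum_le_card_nsmul _ _ _ h2).trans_eq (by
      rw [smul_eq_mul, Finset.card_powersetCard, Finset.card_univ, Fintype.card_fin]))
  have h4 : (univ : Finset (Fin n → Fin w → Fin B)).card = B ^ (w * n) := by
    rw [Finset.card_univ, Fintype.card_fun, Fintype.card_fun, Fintype.card_fin,
      Fintype.card_fin, ← pow_mul, Fintype.card_fin]
  rw [h4] at h3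
  exact absurd h3 (Nat.not_le.2 hnum)



lemma num_reduce (k n w : ℕ) (hk : 2 ≤ k) (hn : 2 * k ≤ n)
    (hchoose : n.choose (2 * k) < 2 ^ (6 * k * w)) :
    n.choose (2 * k) * (((2 * k).choose ((k + 1) / 2) * (2 * k) ^ ((k + 1) / 2)) ^ w
      * (2 ^ 17 * k) ^ ((n - (k + 1) / 2) * w)) < (2 ^ 17 * k) ^ (w * n) := by
  set r := (k + 1) / 2 with hr
  set B := 2 ^ 17 * k with hB
  have hrk : r ≤ k := by omega
  have hrn : r ≤ n := by omega
  have hk2r : k ≤ 2 * r := by omega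
  -- choose (2k) r ≤ 2 ^ (2k)
  have key1 : (2 * k).choose r ≤ 2 ^ (2 * k) := by
    calc (2 * k).choose r ≤ ∑ i ∈ Finset.range (2 * k + 1), (2 * k).choose i := by
          apply Finset.single_le_sum (f := fun i => (2 * k).choose i)
          · intro i _; exact Nat.zero_le _
          · rw [Finset.mem_range]; omega
      _ = 2 ^ (2 * k) := Nat.sum_range_choose (2 * k)
  have key2 : 2 ^ (6 * k) * (2 ^ (2 * k) * (2 * k) ^ r) ≤ B ^ r := by
    have h1 : (2 * k) ^ r = 2 ^ r * k ^ r := by rw [mul_pow]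
    have h2 : B ^ r = 2 ^ (17 * r) * k ^ r := by rw [hB, mul_pow, ← pow_mul]
    rw [h1, h2, ← mul_assoc, ← mul_assoc, ← pow_add, ← pow_add]
    apply Nat.mul_le_mul_right
    apply Nat.pow_le_pow_right (by norm_num)
    omega
  have hXpos : 0 < ((2 * k).choose r * (2 * k) ^ r) ^ w * B ^ ((n - r) * w) := by
    apply Nat.mul_pos
    · apply Nat.pow_pos
      apply Nat.mul_pos
      · exact Nat.choose_pos (by omega)
      · apply Nat.pow_pos; omega
    · apply Nat.pow_pos; omega
  calc n.choose (2 * k) * (((2 * k).choose r * (2 * k) ^ r) ^ w * B ^ ((n - r) * w))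
      < 2 ^ (6 * k * w) * (((2 * k).choose r * (2 * k) ^ r) ^ w * B ^ ((n - r) * w)) := by
        exact Nat.mul_lt_mul_of_lt_of_le hchoose (le_refl _) hXpos
    _ ≤ 2 ^ (6 * k * w) * ((2 ^ (2 * k) * (2 * k) ^ r) ^ w * B ^ ((n - r) * w)) := by
        apply Nat.mul_le_mul_left
        apply Nat.mul_le_mul_right
        apply Nat.pow_le_pow_left
        exact Nat.mul_le_mul_right _ key1
    _ = (2 ^ (6 * k) * (2 ^ (2 * k) * (2 * k) ^ r)) ^ w * B ^ ((n - r) * w) := by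
        ring
    _ ≤ (B ^ r) ^ w * B ^ ((n - r) * w) := by
        apply Nat.mul_le_mul_right
        exact Nat.pow_le_pow_left key2 w
    _ = B ^ (r * w + (n - r) * w) := by rw [← pow_mul, ← pow_add]
    _ = B ^ (w * n) := by
        congr 1
        have h : r * w + (n - r) * w = n * w := by
          rw [← Nat.add_mul]
          congr 1
          omega
        rw [h, Nat.mul_comm]


lemma build {k n d B w : ℕ} (hB : 0 < B) (hk : 1 ≤ k) (x : Fin n → Fin w → Fin B)
    (hgood : ∀ S : Finset (Fin n), S.card = 2 * k → (S.filter (badcol x S)).card < k) :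
    ∃ M : Fin (w * (B + d)) → Fin n → Bool,
      IsSelector (2 * k) n d (k + 1) (w * (B + d)) M := by
  have hBd : 0 < B + d := by omega
  have hdiv : ∀ i : Fin (w * (B + d)), (i : ℕ) / (B + d) < w := by
    intro i
    rw [Nat.div_lt_iff_lt_mul hBd]
    exact i.isLt
  set M : Fin (w * (B + d)) → Fin n → Bool :=
    fun i j => decide ((x j ⟨(i : ℕ) / (B + d), hdiv i⟩ : ℕ) = (i : ℕ) % (B + d)) with hM
  refine ⟨M, ?_, ?_⟩
  · -- run constraint
    intro j i i' hlt h1 h2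
    rw [hM, decide_eq_true_iff] at h1 h2
    set q := (i : ℕ) / (B + d) with hq
    set q' := (i' : ℕ) / (B + d) with hq'
    have hi : (i : ℕ) = (B + d) * q + (i : ℕ) % (B + d) := (Nat.div_add_mod _ _).symm
    have hi' : (i' : ℕ) = (B + d) * q' + (i' : ℕ) % (B + d) := (Nat.div_add_mod _ _).symm
    have hrB : (i : ℕ) % (B + d) < B := by rw [← h1]; exact (x j _).isLt
    have hrB' : (i' : ℕ) % (B + d) < B := by rw [← h2]; exact (x j _).isLt
    have hqq : q ≤ q' := Nat.div_le_div_right (le_of_lt hlt)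
    rcases Nat.eq_or_lt_of_le hqq with heq | hql
    · exfalso
      have hfin : (⟨q, hdiv i⟩ : Fin w) = ⟨q', hdiv i'⟩ := Fin.ext heq
      rw [hfin] at h1
      have hmods : (i : ℕ) % (B + d) = (i' : ℕ) % (B + d) := h1.symm.trans h2
      have hlink : (B + d) * q = (B + d) * q' := by rw [heq]
      have hva := Fin.lt_def.1 hlt
      omega
    · have hva := Fin.lt_def.1 hlt
      have hstep : (B + d) * (q + 1) ≤ (B + d) * q' := Nat.mul_le_mul_left _ hql
      have hexp : (B + d) * (q + 1) = (B + d) * q + (B + d) := by ring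
      omega
  · -- selection
    intro S hScard
    have hsub : S.filter (fun j => ¬ badcol x S j) ⊆ S.filter (fun j =>
        ∃ i : Fin (w * (B + d)), M i j = true ∧ ∀ j' ∈ S, j' ≠ j → M i j' = false) := by
      intro j hj
      rw [Finset.mem_filter] at hj
      obtain ⟨hjS, hnb⟩ := hj
      rw [badcol] at hnb
      push_neg at hnb
      obtain ⟨b, hb⟩ := hnb
      have hrow : (b : ℕ) * (B + d) + (x j b : ℕ) < w * (B + d) := by
        have h1 : (x j b : ℕ) < B + d := by have := (x j b).isLt; omega
        have h2 : (b : ℕ) + 1 ≤ w := b.isLt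
        calc (b : ℕ) * (B + d) + (x j b : ℕ) < (b : ℕ) * (B + d) + (B + d) := by omega
          _ = ((b : ℕ) + 1) * (B + d) := by ring
          _ ≤ w * (B + d) := Nat.mul_le_mul_right _ h2
      set i : Fin (w * (B + d)) := ⟨(b : ℕ) * (B + d) + (x j b : ℕ), hrow⟩ with hi
      have hquot : (i : ℕ) / (B + d) = (b : ℕ) := by
        rw [hi]
        simp only
        rw [Nat.add_comm, Nat.add_mul_div_right _ _ hBd,
          Nat.div_eq_of_lt (show (x j b : ℕ) < B + d by have := (x j b).isLt; omega)]
        omega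
      have hmod : (i : ℕ) % (B + d) = (x j b : ℕ) := by
        rw [hi]
        simp only
        rw [Nat.add_comm, Nat.add_mul_mod_self_right]
        exact Nat.mod_eq_of_lt (by have := (x j b).isLt; omega)
      have hbfin : (⟨(i : ℕ) / (B + d), hdiv i⟩ : Fin w) = b := by
        apply Fin.ext; exact hquot
      rw [Finset.mem_filter]
      refine ⟨hjS, i, ?_, ?_⟩
      · rw [hM, decide_eq_true_iff, hbfin, hmod]
      · intro j' hj'S hj'ne
        rw [hM, decide_eq_false_iff_not, hbfin, hmod]
        intro hcon
        exact hb j' hj'S hj'ne (Fin.ext hcon)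
    have hbadlt := hgood S hScard
    have hge : k + 1 ≤ (S.filter (fun j => ¬ badcol x S j)).card := by
      rw [Finset.filter_not, Finset.card_sdiff_of_subset (Finset.filter_subset _ _), hScard]
      have hle : (S.filter (fun j => badcol x S j)).card ≤ 2 * k := by
        rw [← hScard]; exact Finset.card_le_card (Finset.filter_subset _ _)
      omega
    exact hge.trans (Finset.card_le_card hsub)



lemma pow_self_le (m : ℕ) : (m : ℝ) ^ m ≤ Real.exp 1 ^ m * (m.factorial : ℝ) := by
  induction m with
  | zero => simp
  | succ p ih =>
    have hkey : ((p : ℝ) + 1) ^ p ≤ Real.exp 1 ^ (p + 1) * (p.factorial : ℝ) := by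
      rcases Nat.eq_zero_or_pos p with hp0 | hp
      · subst hp0; simp
      · have hp' : (0 : ℝ) < p := by exact_mod_cast hp
        have h1 : ((p : ℝ) + 1) = p * (1 + 1 / p) := by field_simp
        have h2 : (1 + 1 / (p : ℝ)) ≤ Real.exp (1 / p) := by
          have := Real.add_one_le_exp (1 / (p : ℝ)); linarith
        have h3 : (1 + 1 / (p : ℝ)) ^ p ≤ Real.exp (1 / (p : ℝ)) ^ p := by
          apply pow_le_pow_left₀ (by positivity) h2
        have h4 : Real.exp (1 / (p : ℝ)) ^ p = Real.exp 1 := by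
          rw [← Real.exp_nat_mul]
          congr 1
          field_simp
        calc ((p : ℝ) + 1) ^ p = (p : ℝ) ^ p * (1 + 1 / p) ^ p := by rw [h1, mul_pow]
          _ ≤ (p : ℝ) ^ p * Real.exp 1 := by
              rw [← h4]
              apply mul_le_mul_of_nonneg_left h3 (by positivity)
          _ ≤ (Real.exp 1 ^ p * (p.factorial : ℝ)) * Real.exp 1 := by
              apply mul_le_mul_of_nonneg_right ih (Real.exp_pos 1).le
          _ = Real.exp 1 ^ (p + 1) * (p.factorial : ℝ) := by ring
    have : ((p : ℝ) + 1) ^ (p + 1) = ((p : ℝ) + 1) ^ p * ((p : ℝ) + 1) := by ring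
    push_cast
    rw [this]
    calc ((p : ℝ) + 1) ^ p * ((p : ℝ) + 1)
        ≤ (Real.exp 1 ^ (p + 1) * (p.factorial : ℝ)) * ((p : ℝ) + 1) := by
          apply mul_le_mul_of_nonneg_right hkey (by positivity)
      _ = Real.exp 1 ^ (p + 1) * ((p.factorial : ℝ) * ((p : ℝ) + 1)) := by ring
      _ = Real.exp 1 ^ (p + 1) * ((p + 1).factorial : ℝ) := by
          congr 1
          rw [Nat.factorial_succ]
          push_cast
          ring

lemma choose_real_bound (n m : ℕ) (hm : 0 < m) :
    (n.choose m : ℝ) ≤ (Real.exp 1 * n / m) ^ m := by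
  have hm' : (0 : ℝ) < m := by exact_mod_cast hm
  have hfac : (0 : ℝ) < (m.factorial : ℝ) := by exact_mod_cast m.factorial_pos
  have h1 : (n.choose m : ℝ) ≤ (n : ℝ) ^ m / (m.factorial : ℝ) :=
    Nat.choose_le_pow_div m n
  refine h1.trans ?_
  rw [div_pow, mul_pow, div_le_div_iff₀ hfac (by positivity)]
  calc (n : ℝ) ^ m * (m : ℝ) ^ m ≤ (n : ℝ) ^ m * (Real.exp 1 ^ m * (m.factorial : ℝ)) := by
        apply mul_le_mul_of_nonneg_left (pow_self_le m) (by positivity)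
    _ = Real.exp 1 ^ m * (n : ℝ) ^ m * (m.factorial : ℝ) := by ring

lemma log_ge (n k : ℕ) (hk : 0 < k) (hek : 2 * Real.exp 1 * (k : ℝ) ≤ (n : ℝ)) :
    1 + Real.log 2 ≤ Real.log ((n : ℝ) / (k : ℝ)) := by
  have hk' : (0 : ℝ) < k := by exact_mod_cast hk
  have h2e : (2 : ℝ) * Real.exp 1 ≤ (n : ℝ) / (k : ℝ) := by
    rw [le_div_iff₀ hk']
    linarith
  have hpos : (0 : ℝ) < 2 * Real.exp 1 := by positivity
  calc 1 + Real.log 2 = Real.log (2 * Real.exp 1) := by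
        rw [Real.log_mul (by norm_num) (Real.exp_ne_zero 1), Real.log_exp]
        ring
    _ ≤ Real.log ((n : ℝ) / (k : ℝ)) := Real.log_le_log hpos h2e

lemma choose_lt_pow (n k w : ℕ) (hk : 2 ≤ k) (hn : 0 < n)
    (hek : 2 * Real.exp 1 * (k : ℝ) ≤ (n : ℝ))
    (hw : w = ⌊2 * Real.log ((n : ℝ) / (k : ℝ))⌋₊) :
    n.choose (2 * k) < 2 ^ (6 * k * w) := by
  set L := Real.log ((n : ℝ) / (k : ℝ)) with hLdef
  have hk0 : (0 : ℝ) < k := by exact_mod_cast (by omega : 0 < k)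
  have hn0 : (0 : ℝ) < n := by exact_mod_cast hn
  have hlog2 : 0.6931471803 < Real.log 2 := Real.log_two_gt_d9
  have hlog2' : Real.log 2 < 0.6931471808 := Real.log_two_lt_d9
  have hL : 1 + Real.log 2 ≤ L := log_ge n k (by omega) hek
  have hwlb : 2 * L - 1 < (w : ℝ) := by
    rw [hw]
    have := Nat.lt_floor_add_one (2 * L)
    linarith
  have h2k0 : (0 : ℝ) < 2 * (k : ℝ) := by linarith
  have hbase : (0 : ℝ) < Real.exp 1 * n / (2 * k) := by positivity
  have hlogbase : Real.log (Real.exp 1 * n / (2 * k)) = 1 + L - Real.log 2 := by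
    rw [Real.log_div (by positivity) (by positivity), Real.log_mul (Real.exp_ne_zero 1)
      (by positivity), Real.log_exp, Real.log_mul (by norm_num) (by positivity), hLdef,
      Real.log_div (by positivity) (by positivity)]
    ring
  have hmain : (Real.exp 1 * n / (2 * k)) ^ (2 * k) < (2 : ℝ) ^ (6 * k * w) := by
    have e1 : (Real.exp 1 * n / (2 * k)) ^ (2 * k)
        = Real.exp ((2 * k : ℕ) * Real.log (Real.exp 1 * n / (2 * k))) := by
      rw [Real.exp_nat_mul, Real.exp_log hbase]
    have e2 : (2 : ℝ) ^ (6 * k * w) = Real.exp ((6 * k * w : ℕ) * Real.log 2) := by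
      rw [Real.exp_nat_mul, Real.exp_log (by norm_num)]
    rw [e1, e2]
    apply Real.exp_lt_exp.2
    rw [hlogbase]
    push_cast
    have hkR : (2 : ℝ) ≤ (k : ℝ) := by exact_mod_cast hk
    have hstep : 2 * (1 + L - Real.log 2) < 6 * Real.log 2 * (2 * L - 1) := by nlinarith
    have hwl : 6 * Real.log 2 * (2 * L - 1) ≤ 6 * Real.log 2 * (w : ℝ) := by nlinarith
    calc (2 * k : ℝ) * (1 + L - Real.log 2) = (k : ℝ) * (2 * (1 + L - Real.log 2)) := by ring
      _ < (k : ℝ) * (6 * Real.log 2 * (w : ℝ)) := by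
          apply mul_lt_mul_of_pos_left _ hk0
          linarith
      _ = 6 * (k : ℝ) * (w : ℝ) * Real.log 2 := by ring
  have hchoose := choose_real_bound n (2 * k) (by omega)
  have hfinal : (n.choose (2 * k) : ℝ) < ((2 : ℕ) : ℝ) ^ (6 * k * w) := by
    calc (n.choose (2 * k) : ℝ) ≤ (Real.exp 1 * n / (2 * k)) ^ (2 * k) := by
          have : ((2 * k : ℕ) : ℝ) = 2 * (k : ℝ) := by push_cast; ring
          rw [← this]
          exact hchoose
      _ < (2 : ℝ) ^ (6 * k * w) := hmain
      _ = ((2 : ℕ) : ℝ) ^ (6 * k * w) := by norm_num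
  exact_mod_cast hfinal


end Sel16

theorem stmt_16 :
    ∃ c₀ : ℝ, 0 ≤ c₀ ∧ ∀ n k d : ℕ, 0 < n → 0 < d → 2 ≤ k →
      2 * Real.exp 1 * (k : ℝ) ≤ (n : ℝ) →
      ∃ t : ℕ, (∃ M : Fin t → Fin n → Bool, IsSelector (2 * k) n d (k + 1) t M) ∧
        (t : ℝ) + 2 * (k : ℝ) ≤ 2 * (d : ℝ) * Real.log ((n : ℝ) / (k : ℝ)) +
          c₀ * (k : ℝ) * Real.log ((n : ℝ) / (k : ℝ)) := by
  refine ⟨2 ^ 18 + 2, by norm_num, ?_⟩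
  intro n k d hn hd hk hek
  have hk0 : 0 < k := by omega
  have hkR : (0 : ℝ) < k := by exact_mod_cast hk0
  set L := Real.log ((n : ℝ) / (k : ℝ)) with hLdef
  have hL : 1 + Real.log 2 ≤ L := Sel16.log_ge n k hk0 hek
  have hlog2 : 0.6931471803 < Real.log 2 := Real.log_two_gt_d9
  have hL1 : (1 : ℝ) ≤ L := by linarith
  have h2e : (2 : ℝ) ≤ Real.exp 1 := by have := Real.add_one_le_exp 1; linarith
  have hn2k : 2 * k ≤ n := by
    have h1 : ((2 * k : ℕ) : ℝ) ≤ (n : ℝ) := by push_cast; nlinarith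
    exact_mod_cast h1
  set w := ⌊2 * L⌋₊ with hw
  have hB0 : 0 < 2 ^ 17 * k := by positivity
  have hrep : ∀ (S : Finset (Fin n)) (x : Fin n → Fin w → Fin (2 ^ 17 * k)),
      k ≤ (S.filter (Sel16.badcol x S)).card → ∀ b, (k + 1) / 2 ≤ (Sel16.rep x S b).card :=
    fun S x h b => Sel16.rep_card_of_badcol x S h b
  have hchoose : n.choose (2 * k) < 2 ^ (6 * k * w) :=
    Sel16.choose_lt_pow n k w hk hn hek (by rw [hw, hLdef])
  have hnum := Sel16.num_reduce k n w hk hn2k hchoose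
  obtain ⟨x, hx⟩ := Sel16.exists_good hk0 hB0 hrep hnum
  obtain ⟨M, hM⟩ := Sel16.build hB0 (by omega : 1 ≤ k) x hx
  refine ⟨w * (2 ^ 17 * k + d), ⟨M, hM⟩, ?_⟩
  have hwle : (w : ℝ) ≤ 2 * L := by
    rw [hw]
    exact Nat.floor_le (by linarith)
  have hdR : (0 : ℝ) ≤ d := by positivity
  have h1 : (w : ℝ) * ((2 : ℝ) ^ 17 * k + d) ≤ 2 * L * ((2 : ℝ) ^ 17 * k + d) :=
    mul_le_mul_of_nonneg_right hwle (by positivity)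
  have h2 : 2 * (k : ℝ) ≤ 2 * k * L := by nlinarith
  push_cast
  nlinarith [h1, h2]
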